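/- arXiv:2306.11297 — 2 statements merged into one kernel-verified Lean document; each statement's English description precedes it below -/
import Mathlib

section
/- Let μ > 0, B ≥ 0, γ ≥ 1 be real numbers, and for each integer t ≥ 1 set η_t = 2/(μ(γ + t)). Suppose Δ : ℕ → ℝ is a sequence of nonnegative reals satisfying Δ_{t+1} ≤ (1 − η_t μ) Δ_t + η_t² B for every t ≥ 1. Then for every t ≥ 1, Δ_t ≤ v/(γ + t), where v = max{4B/μ², (γ + 1) Δ_1}. -/
/-- Diminishing-step-size recursion lemma underlying the FedAvg convergence bound. -/
theorem stmt_0 (μ B γ : ℝ) (hμ : 0 < μ) (hB : 0 ≤ B) (hγ : 1 ≤ γ)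
    (η : ℕ → ℝ) (hη : ∀ t : ℕ, 1 ≤ t → η t = 2 / (μ * (γ + t)))
    (Δ : ℕ → ℝ) (hΔnn : ∀ t, 0 ≤ Δ t)
    (hrec : ∀ t : ℕ, 1 ≤ t → Δ (t + 1) ≤ (1 - η t * μ) * Δ t + (η t) ^ 2 * B) :
    ∀ t : ℕ, 1 ≤ t →
      Δ t ≤ max (4 * B / μ ^ 2) ((γ + 1) * Δ 1) / (γ + t) := by
  set v := max (4 * B / μ ^ 2) ((γ + 1) * Δ 1) with hv
  have hvB : 4 * B / μ ^ 2 ≤ v := le_max_left _ _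
  have hv1 : (γ + 1) * Δ 1 ≤ v := le_max_right _ _
  intro t ht
  induction t, ht using Nat.le_induction with
  | base =>
    have h1 : (0:ℝ) < γ + 1 := by linarith
    push_cast
    rw [le_div_iff₀ h1]
    nlinarith
  | succ n hn ih =>
    have hn1 : (1:ℝ) ≤ (n:ℝ) := by exact_mod_cast hn
    have hs : (2:ℝ) ≤ γ + n := by linarith
    have hs0 : (0:ℝ) < γ + n := by linarith
    have hs1 : (0:ℝ) < γ + n + 1 := by linarith
    have hηn := hη n hn
    have hηm : η n * μ = 2 / (γ + n) := by
      rw [hηn]; field_simp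
    have hηsq : (η n) ^ 2 = 4 / (μ ^ 2 * (γ + n) ^ 2) := by
      rw [hηn]; field_simp; ring
    have hrecn := hrec n hn
    rw [hηm, hηsq] at hrecn
    have hcoef : (0:ℝ) ≤ 1 - 2 / (γ + n) := by
      rw [sub_nonneg, div_le_one hs0]; linarith
    have hih : (1 - 2 / (γ + n)) * Δ n ≤ (1 - 2 / (γ + n)) * (v / (γ + n)) :=
      mul_le_mul_of_nonneg_left ih hcoef
    have hBle : 4 / (μ ^ 2 * (γ + n) ^ 2) * B ≤ v / (γ + n) ^ 2 := by
      have heq : 4 / (μ ^ 2 * (γ + n) ^ 2) * B = (4 * B / μ ^ 2) / (γ + n) ^ 2 := by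
        field_simp
      rw [heq]
      gcongr
    have hvnn : 0 ≤ v := le_trans (by positivity) hvB
    have hkey : (1 - 2 / (γ + n)) * (v / (γ + n)) + v / (γ + n) ^ 2 ≤ v / (γ + n + 1) := by
      have heq : (1 - 2 / (γ + n)) * (v / (γ + n)) + v / (γ + n) ^ 2
          = (γ + n - 1) * v / (γ + n) ^ 2 := by
        field_simp; ring
      rw [heq, div_le_div_iff₀ (by positivity) hs1]
      nlinarith
    push_cast
    calc Δ (n + 1) ≤ (1 - 2 / (γ + n)) * Δ n + 4 / (μ ^ 2 * (γ + n) ^ 2) * B := by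
          push_cast at hrecn; linarith
      _ ≤ (1 - 2 / (γ + n)) * (v / (γ + n)) + v / (γ + n) ^ 2 := by linarith
      _ ≤ v / (γ + n + 1) := hkey
      _ = v / (γ + (n + 1)) := by ring_nf
end

section
/- Let Φ : ℝ^d → ℝ be differentiable with L-Lipschitz gradient (L > 0), let θ* be a global minimizer of Φ, let μ > 0, γ ≥ 1, B ≥ 0, and set η_t = 2/(μ(γ + t)) and κ = L/μ. Let (θ_t)_{t ≥ 1} be a sequence in ℝ^d such that Δ_t := ‖θ_t − θ*‖² satisfies Δ_{t+1} ≤ (1 − η_t μ) Δ_t + η_t² B for all t ≥ 1. Then for every T ≥ 1, Φ(θ_T) − Φ(θ*) ≤ (κ/(γ + T)) · (2B/μ + (μ(γ + 1)/2) ‖θ_1 − θ*‖²). -/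
open InnerProductSpace

/-- Descent lemma specialized at a global minimizer. -/
lemma descent_at_min {d : ℕ} (Φ : EuclideanSpace ℝ (Fin d) → ℝ)
    (hdiff : Differentiable ℝ Φ) (L : ℝ) (hL : 0 < L)
    (hlip : LipschitzWith (Real.toNNReal L) (gradient Φ))
    (θstar : EuclideanSpace ℝ (Fin d)) (hmin : ∀ θ, Φ θstar ≤ Φ θ)
    (y : EuclideanSpace ℝ (Fin d)) :
    Φ y - Φ θstar ≤ L / 2 * ‖y - θstar‖ ^ 2 := by
  set v := y - θstar with hv
  -- gradient at minimizer is 0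
  have hloc : IsLocalMin Φ θstar := (isMinOn_univ_iff.2 hmin).isLocalMin Filter.univ_mem
  have hfd0 : fderiv ℝ Φ θstar = 0 := hloc.fderiv_eq_zero
  have hgrad0 : gradient Φ θstar = 0 := by
    rw [gradient, hfd0, map_zero]
  -- inner product formula for fderiv
  have hinner : ∀ p w, fderiv ℝ Φ p w = inner ℝ (gradient Φ p) w := by
    intro p w
    have : (toDual ℝ (EuclideanSpace ℝ (Fin d))) (gradient Φ p) = fderiv ℝ Φ p :=
      (toDual ℝ _).apply_symm_apply _
    rw [← this]; rfl
  -- the curve and composition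
  set c : ℝ → EuclideanSpace ℝ (Fin d) := fun t => θstar + t • v with hc
  have hcurve : ∀ t : ℝ, HasDerivAt c v t := by
    intro t
    have h1 : HasDerivAt (fun t : ℝ => t • v) ((1 : ℝ) • v) t :=
      (hasDerivAt_id t).smul_const v
    have h2 : HasDerivAt (fun t : ℝ => t • v) v t := by simpa using h1
    exact h2.const_add θstar
  set f : ℝ → ℝ := fun t => Φ (c t) with hf
  have hfderiv : ∀ t : ℝ, HasDerivAt f (inner ℝ (gradient Φ (c t)) v) t := by
    intro t
    have := (hdiff (c t)).hasFDerivAt.comp_hasDerivAt t (hcurve t)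
    rw [hinner] at this
    exact this
  -- bound on the derivative for t ≥ 0
  have hderiv_bound : ∀ t : ℝ, 0 ≤ t →
      (inner ℝ (gradient Φ (c t)) v : ℝ) ≤ L * ‖v‖ ^ 2 * t := by
    intro t ht
    have h1 : (inner ℝ (gradient Φ (c t)) v : ℝ)
        = inner ℝ (gradient Φ (c t) - gradient Φ θstar) v := by
      rw [hgrad0, sub_zero]
    rw [h1]
    have h2 : (inner ℝ (gradient Φ (c t) - gradient Φ θstar) v : ℝ)
        ≤ ‖gradient Φ (c t) - gradient Φ θstar‖ * ‖v‖ :=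
      real_inner_le_norm _ _
    have h3 : ‖gradient Φ (c t) - gradient Φ θstar‖ ≤ L * ‖c t - θstar‖ := by
      have := hlip.dist_le_mul (c t) θstar
      rwa [dist_eq_norm, dist_eq_norm, Real.coe_toNNReal L hL.le] at this
    have h4 : ‖c t - θstar‖ = t * ‖v‖ := by
      simp [hc, norm_smul, abs_of_nonneg ht]
    calc (inner ℝ (gradient Φ (c t) - gradient Φ θstar) v : ℝ)
        ≤ ‖gradient Φ (c t) - gradient Φ θstar‖ * ‖v‖ := h2
      _ ≤ L * ‖c t - θstar‖ * ‖v‖ := by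
          apply mul_le_mul_of_nonneg_right h3 (norm_nonneg _)
      _ = L * ‖v‖ ^ 2 * t := by rw [h4]; ring
  -- define g t = L‖v‖² t²/2 - f t, monotone on [0,1]
  set g : ℝ → ℝ := fun t => L * ‖v‖ ^ 2 * t ^ 2 / 2 - f t with hg
  have hgderiv : ∀ t : ℝ, HasDerivAt g
      (L * ‖v‖ ^ 2 * t - inner ℝ (gradient Φ (c t)) v) t := by
    intro t
    have h1 : HasDerivAt (fun t : ℝ => L * ‖v‖ ^ 2 * t ^ 2 / 2)
        (L * ‖v‖ ^ 2 * t) t := by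
      have := ((hasDerivAt_pow 2 t).const_mul (L * ‖v‖ ^ 2)).div_const 2
      exact this.congr_deriv (by push_cast; ring)
    exact h1.sub (hfderiv t)
  have hmono : MonotoneOn g (Set.Icc (0:ℝ) 1) := by
    apply monotoneOn_of_deriv_nonneg (convex_Icc 0 1)
    · exact (Continuous.continuousOn (by
        apply Continuous.sub
        · fun_prop
        · exact (hdiff.continuous.comp (by fun_prop)).congr (fun x => rfl)))
    · intro t ht
      exact (hgderiv t).differentiableAt.differentiableWithinAt
    · intro t ht
      rw [(hgderiv t).deriv]
      rw [interior_Icc] at ht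
      have := hderiv_bound t ht.1.le
      linarith
  have h01 : g 0 ≤ g 1 := hmono (by norm_num) (by norm_num) (by norm_num)
  have hg0 : g 0 = - Φ θstar := by simp [hg, hf, hc]
  have hg1 : g 1 = L * ‖v‖ ^ 2 / 2 - Φ y := by simp [hg, hf, hc, hv]
  rw [hg0, hg1] at h01
  linarith


lemma step_ineq (a v B μ : ℝ) (ha : 2 ≤ a) (hμ : 0 < μ) (hB : 0 ≤ B)
    (hv : 4 * B / μ ^ 2 ≤ v) (hv0 : 0 ≤ v) :
    (1 - 2 / a) * (v / a) + 4 / (μ ^ 2 * a ^ 2) * B ≤ v / (a + 1) := by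
  have ha0 : (0:ℝ) < a := by linarith
  have ha1 : (0:ℝ) < a + 1 := by linarith
  have hμ2 : (0:ℝ) < μ ^ 2 := by positivity
  have h4B : 4 * B ≤ v * μ ^ 2 := by
    rw [div_le_iff₀ hμ2] at hv; linarith
  have e1 : (1 - 2 / a) * (v / a) = (a - 2) * v / a ^ 2 := by
    rw [show 1 - 2 / a = (a - 2) / a by rw [sub_div, div_self ha0.ne'],
      div_mul_div_comm, ← sq, sq]
  have e2 : 4 / (μ ^ 2 * a ^ 2) * B = 4 * B / (μ ^ 2 * a ^ 2) := by ring
  rw [e1, e2, div_add_div _ _ (by positivity) (by positivity),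
    div_le_div_iff₀ (by positivity) ha1]
  have h5 : 4 * B * (a ^ 2 * (a + 1)) ≤ v * μ ^ 2 * (a ^ 2 * (a + 1)) :=
    mul_le_mul_of_nonneg_right h4B (by positivity)
  have h6 : (0:ℝ) ≤ v * μ ^ 2 * a ^ 2 := by positivity
  nlinarith [h5, h6]

/-- FedAvg convergence guarantee (Equation (5)): the expected excess risk bound. -/
theorem stmt_1 {d : ℕ} (Φ : EuclideanSpace ℝ (Fin d) → ℝ)
    (hdiff : Differentiable ℝ Φ)
    (L : ℝ) (hL : 0 < L)
    (hlip : LipschitzWith (Real.toNNReal L) (gradient Φ))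
    (θstar : EuclideanSpace ℝ (Fin d)) (hmin : ∀ θ, Φ θstar ≤ Φ θ)
    (μ γ B : ℝ) (hμ : 0 < μ) (hγ : 1 ≤ γ) (hB : 0 ≤ B)
    (η : ℕ → ℝ) (hη : ∀ t : ℕ, 1 ≤ t → η t = 2 / (μ * (γ + t)))
    (κ : ℝ) (hκ : κ = L / μ)
    (θ : ℕ → EuclideanSpace ℝ (Fin d))
    (hrec : ∀ t : ℕ, 1 ≤ t →
      ‖θ (t + 1) - θstar‖ ^ 2 ≤ (1 - η t * μ) * ‖θ t - θstar‖ ^ 2 + (η t) ^ 2 * B) :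
    ∀ T : ℕ, 1 ≤ T →
      Φ (θ T) - Φ θstar ≤
        (κ / (γ + T)) * (2 * B / μ + (μ * (γ + 1) / 2) * ‖θ 1 - θstar‖ ^ 2) := by
  set Δ : ℕ → ℝ := fun t => ‖θ t - θstar‖ ^ 2 with hΔ
  obtain ⟨v, hvdef⟩ : ∃ v : ℝ, v = 4 * B / μ ^ 2 + (γ + 1) * Δ 1 := ⟨_, rfl⟩
  have hΔnonneg : ∀ t, 0 ≤ Δ t := fun t => by positivity
  have hvnonneg : 0 ≤ v := by rw [hvdef]; positivity
  have hkey : ∀ T : ℕ, 1 ≤ T → Δ T ≤ v / (γ + T) := by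
    intro T hT
    induction T, hT using Nat.le_induction with
    | base =>
      have h2 : (0:ℝ) < γ + 1 := by linarith
      have hμ2 : (0:ℝ) < μ ^ 2 := by positivity
      have h4 : (0:ℝ) ≤ 4 * B / μ ^ 2 := by positivity
      rw [hvdef, show ((1:ℕ):ℝ) = 1 by norm_num, le_div_iff₀ h2]
      nlinarith [hΔnonneg 1]
    | succ t ht ih =>
      have ha : (2:ℝ) ≤ γ + t := by
        have : (1:ℝ) ≤ (t:ℝ) := by exact_mod_cast ht
        linarith
      have ha0 : (0:ℝ) < γ + t := by linarith
      have ha1 : (0:ℝ) < γ + t + 1 := by linarith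
      have hηt : η t = 2 / (μ * (γ + t)) := hη t ht
      have hrect := hrec t ht
      have hημ : η t * μ = 2 / (γ + t) := by
        rw [hηt]; field_simp
      have hη2 : (η t) ^ 2 = 4 / (μ ^ 2 * (γ + t) ^ 2) := by
        rw [hηt]; field_simp; ring
      have hfac : (0:ℝ) ≤ 1 - η t * μ := by
        rw [hημ]; rw [sub_nonneg, div_le_one ha0]; linarith
      have hstep : Δ (t + 1) ≤ (1 - 2 / (γ + t)) * (v / (γ + t)) + 4 / (μ ^ 2 * (γ + t) ^ 2) * B := by
        calc Δ (t + 1) ≤ (1 - η t * μ) * Δ t + (η t) ^ 2 * B := hrect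
          _ ≤ (1 - 2 / (γ + t)) * (v / (γ + t)) + 4 / (μ ^ 2 * (γ + t) ^ 2) * B := by
              rw [hημ, hη2] at *
              exact add_le_add (mul_le_mul_of_nonneg_left ih hfac) le_rfl
      have hBv : 4 * B / μ ^ 2 ≤ v := by
        rw [hvdef]
        nlinarith [hΔnonneg 1]
      have hgoal : (1 - 2 / (γ + t)) * (v / (γ + t)) + 4 / (μ ^ 2 * (γ + t) ^ 2) * B
          ≤ v / (γ + t + 1) :=
        step_ineq (γ + t) v B μ ha hμ hB hBv hvnonneg
      have : Δ (t + 1) ≤ v / (γ + t + 1) := le_trans hstep hgoal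
      have hcast : ((t + 1 : ℕ) : ℝ) = (t : ℝ) + 1 := by push_cast; ring
      rw [hcast, ← add_assoc]; exact this
  intro T hT
  have hdesc := descent_at_min Φ hdiff L hL hlip θstar hmin (θ T)
  have hTpos : (0:ℝ) < γ + T := by
    have : (1:ℝ) ≤ (T:ℝ) := by exact_mod_cast hT
    linarith
  have h1 : Φ (θ T) - Φ θstar ≤ L / 2 * (v / (γ + T)) := by
    calc Φ (θ T) - Φ θstar ≤ L / 2 * Δ T := hdesc
      _ ≤ L / 2 * (v / (γ + T)) := by
          apply mul_le_mul_of_nonneg_left (hkey T hT) (by positivity)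
  have heq : L / 2 * (v / (γ + T)) =
      (κ / (γ + T)) * (2 * B / μ + (μ * (γ + 1) / 2) * ‖θ 1 - θstar‖ ^ 2) := by
    rw [hκ, hvdef, hΔ]
    field_simp
    ring
  linarith [h1, heq.le]
end
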